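/- Let G be the one-sum of graphs G_1 and G_2 with V(G_1) ∩ V(G_2) = {c}. Then for any a ∈ V(G_1)\{c} and b ∈ V(G_2)\{c}, S(G,a,b) ≅ S(G_1,a,c) □ S(G_2,c,b). -/

import Mathlib

open SimpleGraph

/-- The type of `a,b`-geodesics in `G`: paths from `a` to `b` of length `d_G(a,b)`. -/
def Geodesic {V : Type*} (G : SimpleGraph V) (a b : V) : Type _ :=
  {p : G.Walk a b // p.IsPath ∧ p.length = G.dist a b}

/-- Two geodesics differ at exactly the index `i` (comparing vertex sequences). -/
def DiffAt {V : Type*} {G : SimpleGraph V} {a b : V} (U W : Geodesic G a b) (i : ℕ) : Prop :=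
  U.1.support.getD i a ≠ W.1.support.getD i a ∧
    ∀ j, j ≠ i → U.1.support.getD j a = W.1.support.getD j a

/-- The shortest path graph `S(G,a,b)`: vertices are `a,b`-geodesics, adjacent iff their
vertex sequences differ in exactly one position. -/
def SPG {V : Type*} (G : SimpleGraph V) (a b : V) : SimpleGraph (Geodesic G a b) where
  Adj U W := ∃ i, DiffAt U W i
  symm := by
    constructor
    rintro U W ⟨i, hne, hj⟩
    exact ⟨i, hne.symm, fun j hji => (hj j hji).symm⟩
  loopless := by
    constructor
    rintro U ⟨i, hne, -⟩
    exact hne rfl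

/-- A graph is a shortest path graph if it is isomorphic to `S(G,a,b)` for some `G`, `a ≠ b`. -/
def IsSPGraph {α : Type*} (H : SimpleGraph α) : Prop :=
  ∃ (V : Type) (G : SimpleGraph V) (a b : V), a ≠ b ∧ Nonempty (H ≃g SPG G a b)

section Aux

variable {V : Type*}

private lemma walk_eq_of_support_eq {G : SimpleGraph V} {u v : V} (p : G.Walk u v) :
    ∀ (q : G.Walk u v), p.support = q.support → p = q := by
  induction p with
  | nil =>
    intro q hs
    cases q with
    | nil => rfl
    | cons h q =>
      simp only [Walk.support_nil, Walk.support_cons, List.cons.injEq] at hs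
      exact absurd hs.2.symm q.support_ne_nil
  | cons h p ih =>
    intro q hs
    cases q with
    | nil =>
      simp only [Walk.support_nil, Walk.support_cons, List.cons.injEq] at hs
      exact absurd hs.2 p.support_ne_nil
    | cons h' q' =>
      simp only [Walk.support_cons, List.cons.injEq, true_and] at hs
      have hxy := p.head_support
      rw [show p.support.head (by simp) = q'.support.head (by simp) from by
        congr 1, q'.head_support] at hxy
      subst hxy
      rw [ih q' hs]

private lemma getD_default_irrel {α : Type*} (l : List α) (n : ℕ) (x y : α)
    (h : n < l.length) : l.getD n x = l.getD n y := by
  rw [List.getD_eq_getElem l x h, List.getD_eq_getElem l y h]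

private lemma listA {α : Type*} (s s₁ s₂ : List α) (d₁ d₂ : ℕ) (c : α)
    (h : s = s₁.dropLast ++ s₂)
    (h₁ : s₁.length = d₁ + 1) (h₂ : s₂.length = d₂ + 1)
    (h₁c : ∀ x, s₁.getD d₁ x = c) (h₂c : ∀ x, s₂.getD 0 x = c) :
    ∀ j, j ≤ d₁ → ∀ x y, s.getD j x = s₁.getD j y := by
  intro j hj x y
  have hdl : s₁.dropLast.length = d₁ := by rw [List.length_dropLast, h₁]; omega
  rcases lt_or_eq_of_le hj with hj | rfl
  · rw [h, List.getD_append _ _ _ _ (by omega), List.getD_eq_getElem _ _ (by omega),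
      List.getElem_dropLast, ← List.getD_eq_getElem _ y (by omega)]
  · rw [h, List.getD_append_right _ _ _ _ (by omega), h₁c]
    have : j - s₁.dropLast.length = 0 := by omega
    rw [this, h₂c]

private lemma listB {α : Type*} (s s₁ s₂ : List α) (d₁ d₂ : ℕ)
    (h : s = s₁.dropLast ++ s₂)
    (h₁ : s₁.length = d₁ + 1) (h₂ : s₂.length = d₂ + 1) :
    ∀ j, j ≤ d₂ → ∀ x y, s.getD (d₁ + j) x = s₂.getD j y := by
  intro j hj x y
  have hdl : s₁.dropLast.length = d₁ := by rw [List.length_dropLast, h₁]; omega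
  rw [h, List.getD_append_right _ _ _ _ (by omega)]
  have : d₁ + j - s₁.dropLast.length = j := by omega
  rw [this]
  exact getD_default_irrel _ _ _ _ (by omega)

private lemma walk_support_subset {H : SimpleGraph V} {S : Set V}
    (hH : ∀ u v, H.Adj u v → u ∈ S ∧ v ∈ S) {x y : V} (p : H.Walk x y) (hx : x ∈ S) :
    ∀ z ∈ p.support, z ∈ S := by
  induction p with
  | nil => intro z hz; simp at hz; subst hz; exact hx
  | cons h p ih =>
    intro z hz
    simp only [Walk.support_cons, List.mem_cons] at hz
    rcases hz with rfl | hz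
    · exact hx
    · exact ih (hH _ _ h).2 z hz

private lemma support_concat' {H : SimpleGraph V} {x y : V} (w : H.Walk x y) :
    w.support = w.support.dropLast ++ [y] := by
  conv_lhs => rw [← List.dropLast_append_getLast w.support_ne_nil, w.getLast_support]

private lemma walk_getD_last {H : SimpleGraph V} {x y : V} (w : H.Walk x y) (z : V) :
    w.support.getD w.length z = y := by
  have h := w.getLast_support
  rw [List.getLast_eq_getElem] at h
  rw [List.getD_eq_getElem _ _ (by rw [Walk.length_support]; omega)]
  convert h using 2
  rw [Walk.length_support]
  omega

private lemma walk_getD_zero {H : SimpleGraph V} {x y : V} (w : H.Walk x y) (z : V) :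
    w.support.getD 0 z = x := by
  rw [w.support_eq_cons]; rfl

variable [DecidableEq V] {G₁ G₂ : SimpleGraph V} {S₁ S₂ : Set V} {c a b : V}

private lemma support_append' {G : SimpleGraph V} (u : G.Walk a c) (v : G.Walk c b) :
    (u.append v).support = u.support.dropLast ++ v.support := by
  rw [Walk.support_append, v.support_eq_cons]
  conv_lhs => rw [← List.dropLast_append_getLast u.support_ne_nil, u.getLast_support]
  simp only [List.tail_cons, List.append_assoc, List.singleton_append]

private lemma not_mem_dropLast_of_count {G : SimpleGraph V} (u : G.Walk a c)
    (hu : u.support.count c = 1) : c ∉ u.support.dropLast := by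
  intro hmem
  have h1 : u.support = u.support.dropLast ++ [c] := support_concat' u
  rw [h1, List.count_append] at hu
  have hpos : 0 < u.support.dropLast.count c := List.count_pos_iff.mpr hmem
  simp at hu
  omega

private lemma split_unique {G : SimpleGraph V} {u u' : G.Walk a c} {v v' : G.Walk c b}
    (h : u.append v = u'.append v')
    (hu : u.support.count c = 1) (hu' : u'.support.count c = 1) : u = u' ∧ v = v' := by
  have hs : u.support.dropLast ++ v.support = u'.support.dropLast ++ v'.support := by
    rw [← support_append', ← support_append', h]
  have hidx : u.support.dropLast.length = u'.support.dropLast.length := by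
    have h1 := List.idxOf_append_of_notMem (l₂ := v.support) (not_mem_dropLast_of_count u hu)
    have h2 := List.idxOf_append_of_notMem (l₂ := v'.support) (not_mem_dropLast_of_count u' hu')
    rw [hs] at h1
    rw [h1] at h2
    have hv : List.idxOf c v.support = 0 := by
      rw [v.support_eq_cons]; exact List.idxOf_cons_self
    have hv' : List.idxOf c v'.support = 0 := by
      rw [v'.support_eq_cons]; exact List.idxOf_cons_self
    omega
  have hdl : u.support.dropLast = u'.support.dropLast ∧ v.support = v'.support :=
    List.append_inj hs hidx
  have hsup : u.support = u'.support := by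
    rw [support_concat' u, support_concat' u', hdl.1]
  exact ⟨walk_eq_of_support_eq u u' hsup, walk_eq_of_support_eq v v' hdl.2⟩

private lemma edges_sub_left (hS : S₁ ∩ S₂ = {c})
    (h₁ : ∀ u v, G₁.Adj u v → u ∈ S₁ ∧ v ∈ S₁)
    (h₂ : ∀ u v, G₂.Adj u v → u ∈ S₂ ∧ v ∈ S₂) :
    ∀ {x y : V} (p : (G₁ ⊔ G₂).Walk x y), y = c → x ∈ S₁ → p.support.count c = 1 →
      ∀ e ∈ p.edges, e ∈ G₁.edgeSet := by
  intro x y p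
  induction p with
  | nil => intro _ _ _ e he; simp at he
  | @cons x z y h p ih =>
    intro hyc hx hcount e he
    have hcmem : c ∈ p.support := hyc ▸ p.end_mem_support
    have hxc : x ≠ c := by
      intro hxeq
      have hpos : 0 < p.support.count c := List.count_pos_iff.mpr hcmem
      simp only [Walk.support_cons, List.count_cons, hxeq, beq_self_eq_true, if_true] at hcount
      omega
    have hcount' : p.support.count c = 1 := by
      simpa [Walk.support_cons, List.count_cons, hxc.symm, hxc] using hcount
    have hadj : G₁.Adj x z := by
      rcases h with h | h
      · exact h
      · exfalso
        have hmem : x ∈ S₁ ∩ S₂ := ⟨hx, (h₂ _ _ h).1⟩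
        rw [hS] at hmem
        exact hxc hmem
    have hz : z ∈ S₁ := (h₁ _ _ hadj).2
    simp only [Walk.edges_cons, List.mem_cons] at he
    rcases he with rfl | he
    · exact hadj
    · exact ih hyc hz hcount' e he

private lemma edges_sub_right (hS : S₁ ∩ S₂ = {c})
    (h₁ : ∀ u v, G₁.Adj u v → u ∈ S₁ ∧ v ∈ S₁)
    (h₂ : ∀ u v, G₂.Adj u v → u ∈ S₂ ∧ v ∈ S₂)
    {x y : V} (p : (G₁ ⊔ G₂).Walk x y) (hx : x = c) (hy : y ∈ S₂)
    (hcount : p.support.count c = 1) :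
    ∀ e ∈ p.edges, e ∈ G₂.edgeSet := by
  have hsw : S₂ ∩ S₁ = {c} := by rw [Set.inter_comm]; exact hS
  have hq : ∀ e ∈ p.reverse.edges, e ∈ (G₂ ⊔ G₁).edgeSet := by
    intro e he
    have h := p.reverse.edges_subset_edgeSet he
    rw [edgeSet_sup] at h ⊢
    exact h.symm
  intro e he
  refine edges_sub_left hsw h₂ h₁ (p.reverse.transfer (G₂ ⊔ G₁) hq) (by rw [hx]) hy ?_ e ?_
  · rw [Walk.support_transfer, Walk.support_reverse, List.count_reverse]
    exact hcount
  · rw [Walk.edges_transfer, Walk.edges_reverse, List.mem_reverse]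
    exact he

private lemma c_mem_support (hS : S₁ ∩ S₂ = {c})
    (h₁ : ∀ u v, G₁.Adj u v → u ∈ S₁ ∧ v ∈ S₁)
    (h₂ : ∀ u v, G₂.Adj u v → u ∈ S₂ ∧ v ∈ S₂) :
    ∀ {x y : V} (p : (G₁ ⊔ G₂).Walk x y), x ∈ S₁ → y ∉ S₁ → c ∈ p.support := by
  intro x y p
  induction p with
  | nil => intro hx hy; exact absurd hx hy
  | @cons x z _ h p ih =>
    intro hx hy
    by_cases hxc : x = c
    · subst hxc; exact Walk.start_mem_support _
    · have hadj : G₁.Adj x z := by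
        rcases h with h | h
        · exact h
        · exfalso
          have hmem : x ∈ S₁ ∩ S₂ := ⟨hx, (h₂ _ _ h).1⟩
          rw [hS] at hmem
          exact hxc hmem
      simp only [Walk.support_cons, List.mem_cons]
      exact Or.inr (ih (h₁ _ _ hadj).2 hy)

section main
variable (hS : S₁ ∩ S₂ = {c})
    (h₁ : ∀ u v, G₁.Adj u v → u ∈ S₁ ∧ v ∈ S₁)
    (h₂ : ∀ u v, G₂.Adj u v → u ∈ S₂ ∧ v ∈ S₂)
    (ha : a ∈ S₁) (hb : b ∈ S₂) (hbc : b ≠ c)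

include hS h₁ h₂ ha hb hbc in
private lemma exists_split (p : (G₁ ⊔ G₂).Walk a b) (hp : p.IsPath) :
    ∃ (q₁ : G₁.Walk a c) (q₂ : G₂.Walk c b), q₁.IsPath ∧ q₂.IsPath ∧
      q₁.length + q₂.length = p.length ∧
      p.support = q₁.support.dropLast ++ q₂.support := by
  have hbS₁ : b ∉ S₁ := by
    intro hbS
    have hmem : b ∈ S₁ ∩ S₂ := ⟨hbS, hb⟩
    rw [hS] at hmem
    exact hbc hmem
  have hc : c ∈ p.support := c_mem_support hS h₁ h₂ p ha hbS₁
  set u := p.takeUntil c hc with hu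
  set v := p.dropUntil c hc with hv
  have hcu : u.support.count c = 1 := p.count_support_takeUntil_eq_one hc
  have hvpath : v.IsPath := hp.dropUntil hc
  have hcv : v.support.count c = 1 :=
    List.count_eq_one_of_mem hvpath.support_nodup v.start_mem_support
  have heu : ∀ e ∈ u.edges, e ∈ G₁.edgeSet :=
    edges_sub_left hS h₁ h₂ u rfl ha hcu
  have hev : ∀ e ∈ v.edges, e ∈ G₂.edgeSet :=
    edges_sub_right hS h₁ h₂ v rfl hb hcv
  refine ⟨u.transfer G₁ heu, v.transfer G₂ hev, (hp.takeUntil hc).transfer heu,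
    hvpath.transfer hev, ?_, ?_⟩
  · rw [Walk.length_transfer, Walk.length_transfer]
    have hlen := congrArg Walk.length (p.take_spec hc)
    rw [Walk.length_append] at hlen
    exact hlen
  · rw [Walk.support_transfer, Walk.support_transfer]
    conv_lhs => rw [← p.take_spec hc]
    exact support_append' u v

include hS h₁ h₂ ha hb hbc in
private lemma dist_eq' (hr₁ : G₁.Reachable a c) (hr₂ : G₂.Reachable c b) :
    (G₁ ⊔ G₂).dist a b = G₁.dist a c + G₂.dist c b := by
  obtain ⟨w₁, hw₁⟩ := hr₁.exists_walk_length_eq_dist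
  obtain ⟨w₂, hw₂⟩ := hr₂.exists_walk_length_eq_dist
  have he₁ : ∀ e ∈ w₁.edges, e ∈ (G₁ ⊔ G₂).edgeSet := fun e he =>
    edgeSet_mono le_sup_left (w₁.edges_subset_edgeSet he)
  have he₂ : ∀ e ∈ w₂.edges, e ∈ (G₁ ⊔ G₂).edgeSet := fun e he =>
    edgeSet_mono le_sup_right (w₂.edges_subset_edgeSet he)
  set m := (w₁.transfer (G₁ ⊔ G₂) he₁).append (w₂.transfer (G₁ ⊔ G₂) he₂) with hm
  have hmlen : m.length = G₁.dist a c + G₂.dist c b := by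
    rw [hm, Walk.length_append, Walk.length_transfer, Walk.length_transfer, hw₁, hw₂]
  refine le_antisymm ?_ ?_
  · have := SimpleGraph.dist_le m
    omega
  · have hreach : (G₁ ⊔ G₂).Reachable a b := ⟨m⟩
    obtain ⟨w, hwl⟩ := hreach.exists_walk_length_eq_dist
    have hble := w.length_bypass_le
    have hdle := SimpleGraph.dist_le w.bypass
    obtain ⟨q₁, q₂, -, -, hlen, -⟩ := exists_split hS h₁ h₂ ha hb hbc w.bypass w.bypass_isPath
    have hd₁ := SimpleGraph.dist_le q₁
    have hd₂ := SimpleGraph.dist_le q₂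
    omega

end main
end Aux

theorem stmt7 {V : Type*} (G₁ G₂ : SimpleGraph V) (S₁ S₂ : Set V) (c a b : V)
    (hS : S₁ ∩ S₂ = {c})
    (h₁ : ∀ u v, G₁.Adj u v → u ∈ S₁ ∧ v ∈ S₁)
    (h₂ : ∀ u v, G₂.Adj u v → u ∈ S₂ ∧ v ∈ S₂)
    (ha : a ∈ S₁) (hac : a ≠ c) (hb : b ∈ S₂) (hbc : b ≠ c) :
    Nonempty (SPG (G₁ ⊔ G₂) a b ≃g (SPG G₁ a c □ SPG G₂ c b)) := by
  classical
  have hcS : c ∈ S₁ ∩ S₂ := by rw [hS]; rfl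
  -- the splitting function
  have hFex : ∀ P : Geodesic (G₁ ⊔ G₂) a b, ∃ Q : Geodesic G₁ a c × Geodesic G₂ c b,
      P.1.support = Q.1.1.support.dropLast ++ Q.2.1.support := by
    rintro ⟨p, hp, hl⟩
    obtain ⟨q₁, q₂, hq₁, hq₂, hlen, hsup⟩ := exists_split hS h₁ h₂ ha hb hbc p hp
    have hd := dist_eq' hS h₁ h₂ ha hb hbc ⟨q₁⟩ ⟨q₂⟩
    have hd₁ := SimpleGraph.dist_le q₁
    have hd₂ := SimpleGraph.dist_le q₂
    exact ⟨(⟨q₁, hq₁, by omega⟩, ⟨q₂, hq₂, by omega⟩), hsup⟩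
  obtain ⟨F, hF⟩ : ∃ F : Geodesic (G₁ ⊔ G₂) a b → Geodesic G₁ a c × Geodesic G₂ c b,
      ∀ P, P.1.support = (F P).1.1.support.dropLast ++ (F P).2.1.support :=
    ⟨fun P => (hFex P).choose, fun P => (hFex P).choose_spec⟩
  -- length facts
  have hlen₁ : ∀ Q₁ : Geodesic G₁ a c, Q₁.1.support.length = G₁.dist a c + 1 := fun Q₁ => by
    rw [Walk.length_support, Q₁.2.2]
  have hlen₂ : ∀ Q₂ : Geodesic G₂ c b, Q₂.1.support.length = G₂.dist c b + 1 := fun Q₂ => by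
    rw [Walk.length_support, Q₂.2.2]
  have h₁c : ∀ (Q₁ : Geodesic G₁ a c) (x : V), Q₁.1.support.getD (G₁.dist a c) x = c := by
    rintro ⟨w, hw, hwl⟩ x
    show w.support.getD (G₁.dist a c) x = c
    rw [show G₁.dist a c = w.length from hwl.symm]
    exact walk_getD_last w x
  have h₂c : ∀ (Q₂ : Geodesic G₂ c b) (x : V), Q₂.1.support.getD 0 x = c := fun Q₂ x =>
    walk_getD_zero Q₂.1 x
  have hA : ∀ P, ∀ j ≤ G₁.dist a c, ∀ x y,
      P.1.support.getD j x = (F P).1.1.support.getD j y := fun P =>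
    listA _ _ _ _ (G₂.dist c b) c (hF P) (hlen₁ _) (hlen₂ _) (h₁c _) (h₂c _)
  have hB : ∀ P, ∀ j ≤ G₂.dist c b, ∀ x y,
      P.1.support.getD (G₁.dist a c + j) x = (F P).2.1.support.getD j y := fun P =>
    listB _ _ _ _ _ (hF P) (hlen₁ _) (hlen₂ _)
  have hlenP : ∀ P : Geodesic (G₁ ⊔ G₂) a b,
      P.1.support.length = G₁.dist a c + G₂.dist c b + 1 := by
    intro P
    rw [hF P, List.length_append, List.length_dropLast, hlen₁, hlen₂]
    omega
  -- uniqueness of the decomposition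
  have hUniq : ∀ (P : Geodesic (G₁ ⊔ G₂) a b) (Q : Geodesic G₁ a c × Geodesic G₂ c b),
      P.1.support = Q.1.1.support.dropLast ++ Q.2.1.support → Q = F P := by
    intro P Q hQ
    have hlen : Q.1.1.support.dropLast.length = (F P).1.1.support.dropLast.length := by
      rw [List.length_dropLast, List.length_dropLast, hlen₁, hlen₁]
    obtain ⟨hd, ht⟩ := List.append_inj (hQ.symm.trans (hF P)) hlen
    have hs1 : Q.1.1.support = (F P).1.1.support := by
      rw [support_concat' Q.1.1, support_concat' (F P).1.1, hd]
    have e1 : Q.1 = (F P).1 := Subtype.ext (walk_eq_of_support_eq _ _ hs1)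
    have e2 : Q.2 = (F P).2 := Subtype.ext (walk_eq_of_support_eq _ _ ht)
    exact Prod.ext e1 e2
  -- bijectivity
  have hinj : Function.Injective F := by
    intro P P' h
    apply Subtype.ext
    apply walk_eq_of_support_eq
    rw [hF P, hF P', h]
  have hsurj : Function.Surjective F := by
    rintro ⟨Q₁, Q₂⟩
    have he₁ : ∀ e ∈ Q₁.1.edges, e ∈ (G₁ ⊔ G₂).edgeSet := fun e he =>
      edgeSet_mono le_sup_left (Q₁.1.edges_subset_edgeSet he)
    have he₂ : ∀ e ∈ Q₂.1.edges, e ∈ (G₁ ⊔ G₂).edgeSet := fun e he =>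
      edgeSet_mono le_sup_right (Q₂.1.edges_subset_edgeSet he)
    set p := (Q₁.1.transfer (G₁ ⊔ G₂) he₁).append (Q₂.1.transfer (G₁ ⊔ G₂) he₂) with hp
    have hsup : p.support = Q₁.1.support.dropLast ++ Q₂.1.support := by
      rw [hp, support_append', Walk.support_transfer, Walk.support_transfer]
    have hnodup : p.support.Nodup := by
      rw [hsup]
      refine List.nodup_append.mpr ⟨?_, Q₂.2.1.support_nodup, ?_⟩
      · exact Q₁.2.1.support_nodup.sublist (List.dropLast_sublist _)
      · intro z hz w hz' hzw
        subst hzw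
        have hzS₁ : z ∈ S₁ :=
          walk_support_subset h₁ Q₁.1 ha z ((List.dropLast_sublist _).subset hz)
        have hzS₂ : z ∈ S₂ := walk_support_subset h₂ Q₂.1 hcS.2 z hz'
        have hzc : z = c := by
          have hmm : z ∈ S₁ ∩ S₂ := ⟨hzS₁, hzS₂⟩
          rwa [hS] at hmm
        subst hzc
        exact not_mem_dropLast_of_count Q₁.1
          (List.count_eq_one_of_mem Q₁.2.1.support_nodup Q₁.1.end_mem_support) hz
    have hplen : p.length = (G₁ ⊔ G₂).dist a b := by
      rw [dist_eq' hS h₁ h₂ ha hb hbc ⟨Q₁.1⟩ ⟨Q₂.1⟩, hp, Walk.length_append,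
        Walk.length_transfer, Walk.length_transfer, Q₁.2.2, Q₂.2.2]
    exact ⟨⟨p, Walk.IsPath.mk' hnodup, hplen⟩, (hUniq _ (Q₁, Q₂) hsup).symm⟩
  -- build the isomorphism
  have hSPG : ∀ {W : Type _} (G : SimpleGraph W) (x y : W) (U U' : Geodesic G x y),
      (SPG G x y).Adj U U' ↔ ∃ i, (U.1.support.getD i x ≠ U'.1.support.getD i x ∧
        ∀ j, j ≠ i → U.1.support.getD j x = U'.1.support.getD j x) := fun _ _ _ _ _ => Iff.rfl
  refine ⟨⟨Equiv.ofBijective F ⟨hinj, hsurj⟩, ?_⟩⟩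
  intro P P'
  show (SPG G₁ a c □ SPG G₂ c b).Adj (F P) (F P') ↔ (SPG (G₁ ⊔ G₂) a b).Adj P P'
  rw [boxProd_adj, hSPG, hSPG, hSPG]
  constructor
  · rintro (⟨⟨i, hne, heq⟩, h2⟩ | ⟨⟨i, hne, heq⟩, h1⟩)
    · -- first coordinate differs
      have hile : i < G₁.dist a c := by
        by_contra hgt
        push_neg at hgt
        rcases eq_or_lt_of_le hgt with heq' | hlt
        · exact hne (by rw [← heq', h₁c, h₁c])
        · exact hne (by rw [List.getD_eq_default _ _ (by rw [hlen₁]; omega),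
            List.getD_eq_default _ _ (by rw [hlen₁]; omega)])
      refine ⟨i, ?_, ?_⟩
      · rw [hA P i (le_of_lt hile) a a, hA P' i (le_of_lt hile) a a]
        exact hne
      · intro j hj
        rcases le_or_gt j (G₁.dist a c) with hle | hgt
        · rw [hA P j hle a a, hA P' j hle a a]
          exact heq j hj
        · rcases le_or_gt j (G₁.dist a c + G₂.dist c b) with hle2 | hgt2
          · have hj2 : j - G₁.dist a c ≤ G₂.dist c b := by omega
            have hrw : G₁.dist a c + (j - G₁.dist a c) = j := by omega
            have b1 := hB P (j - G₁.dist a c) hj2 a c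
            have b2 := hB P' (j - G₁.dist a c) hj2 a c
            rw [hrw] at b1 b2
            rw [b1, b2, h2]
          · rw [List.getD_eq_default _ _ (by rw [hlenP]; omega),
              List.getD_eq_default _ _ (by rw [hlenP]; omega)]
    · -- second coordinate differs
      have h0 : i ≠ 0 := by
        rintro rfl
        exact hne (by rw [h₂c, h₂c])
      have hile : i ≤ G₂.dist c b := by
        by_contra hgt
        push_neg at hgt
        exact hne (by rw [List.getD_eq_default _ _ (by rw [hlen₂]; omega),
          List.getD_eq_default _ _ (by rw [hlen₂]; omega)])
      refine ⟨G₁.dist a c + i, ?_, ?_⟩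
      · rw [hB P i hile a c, hB P' i hile a c]
        exact hne
      · intro j hj
        rcases le_or_gt j (G₁.dist a c) with hle | hgt
        · rw [hA P j hle a a, hA P' j hle a a, h1]
        · rcases le_or_gt j (G₁.dist a c + G₂.dist c b) with hle2 | hgt2
          · have hj2 : j - G₁.dist a c ≤ G₂.dist c b := by omega
            have hrw : G₁.dist a c + (j - G₁.dist a c) = j := by omega
            have b1 := hB P (j - G₁.dist a c) hj2 a c
            have b2 := hB P' (j - G₁.dist a c) hj2 a c
            rw [hrw] at b1 b2
            rw [b1, b2]
            exact heq _ (by omega)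
          · rw [List.getD_eq_default _ _ (by rw [hlenP]; omega),
              List.getD_eq_default _ _ (by rw [hlenP]; omega)]
  · rintro ⟨i, hne, heq⟩
    have hub : i ≤ G₁.dist a c + G₂.dist c b := by
      by_contra h
      push_neg at h
      exact hne (by rw [List.getD_eq_default _ _ (by rw [hlenP]; omega),
        List.getD_eq_default _ _ (by rw [hlenP]; omega)])
    have hne_d : i ≠ G₁.dist a c := by
      rintro rfl
      apply hne
      have b1 := hB P 0 (Nat.zero_le _) a c
      have b2 := hB P' 0 (Nat.zero_le _) a c
      rw [Nat.add_zero] at b1 b2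
      rw [b1, b2, h₂c, h₂c]
    rcases lt_or_gt_of_ne hne_d with hlt | hgt
    · left
      constructor
      · refine ⟨i, ?_, ?_⟩
        · rw [← hA P i (le_of_lt hlt) a a, ← hA P' i (le_of_lt hlt) a a]
          exact hne
        · intro j hj
          rcases le_or_gt j (G₁.dist a c) with hle | hgt2
          · rw [← hA P j hle a a, ← hA P' j hle a a]
            exact heq j hj
          · rw [List.getD_eq_default _ _ (by rw [hlen₁]; omega),
              List.getD_eq_default _ _ (by rw [hlen₁]; omega)]
      · refine Subtype.ext (walk_eq_of_support_eq _ _ ?_)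
        apply List.ext_getElem (by rw [hlen₂, hlen₂])
        intro j hj1 hj2
        have hjle : j ≤ G₂.dist c b := by rw [hlen₂] at hj1; omega
        have b1 := hB P j hjle a c
        have b2 := hB P' j hjle a c
        rw [← List.getD_eq_getElem _ c hj1, ← List.getD_eq_getElem _ c hj2, ← b1, ← b2]
        exact heq _ (by omega)
    · right
      refine ⟨⟨i - G₁.dist a c, ?_, ?_⟩, ?_⟩
      · have hi2 : i - G₁.dist a c ≤ G₂.dist c b := by omega
        have hrw : G₁.dist a c + (i - G₁.dist a c) = i := by omega
        have b1 := hB P (i - G₁.dist a c) hi2 a c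
        have b2 := hB P' (i - G₁.dist a c) hi2 a c
        rw [hrw] at b1 b2
        rw [← b1, ← b2]
        exact hne
      · intro j hj
        rcases le_or_gt j (G₂.dist c b) with hle | hgt2
        · rw [← hB P j hle a c, ← hB P' j hle a c]
          exact heq _ (by omega)
        · rw [List.getD_eq_default _ _ (by rw [hlen₂]; omega),
            List.getD_eq_default _ _ (by rw [hlen₂]; omega)]
      · refine Subtype.ext (walk_eq_of_support_eq _ _ ?_)
        apply List.ext_getElem (by rw [hlen₁, hlen₁])
        intro j hj1 hj2
        have hjle : j ≤ G₁.dist a c := by rw [hlen₁] at hj1; omega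
        rw [← List.getD_eq_getElem _ a hj1, ← List.getD_eq_getElem _ a hj2,
          ← hA P j hjle a a, ← hA P' j hjle a a]
        exact heq _ (by omega)
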